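/- Let R be a left Artinian ring, let 𝒮 be a set of simple R-modules, and let C be a cyclic R-module such that Hom_R(C, E(S')) = 0 for every simple module S' not isomorphic to a member of 𝒮 (E(S') the injective hull). Then every composition factor of C is isomorphic to a module in 𝒮. -/

import Mathlib

universe u
open CategoryTheory

/-- Every module over a ring embeds essentially into an injective module. -/
theorem exists_injective_essential_extension {R : Type u} [Ring R]
    (Q : Type u) [AddCommGroup Q] [Module R Q] :
    ∃ (E : Type u) (_ : AddCommGroup E) (_ : Module R E),
      Module.Injective R E ∧ ∃ j : Q →ₗ[R] E, Function.Injective j ∧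
        ∀ P : Submodule R E, P ⊓ LinearMap.range j = ⊥ → P = ⊥ := by
  classical
  -- Step A : embed `Q` into an injective module `E₀`
  let Qc := ModuleCat.of R Q
  let E₀obj := Injective.under Qc
  let ι : Qc ⟶ E₀obj := Injective.ι Qc
  set E₀ : Type u := ↥E₀obj with hE₀
  have hι : Function.Injective ι := (ModuleCat.mono_iff_injective ι).mp inferInstance
  have h1 : Injective (ModuleCat.of R E₀) := by
    have : Injective E₀obj := inferInstance
    convert this
  have hE₀inj : Module.Injective R E₀ :=
    @Module.injective_module_of_injective_object _ _ _ _ _ h1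
  let i₀ : Q →ₗ[R] E₀ := ι.hom
  have hi₀ : Function.Injective i₀ := hι
  set S : Submodule R E₀ := LinearMap.range i₀ with hS
  -- elementwise essentiality predicate
  let Ess : Submodule R E₀ → Prop := fun M =>
    ∀ x ∈ M, x ≠ 0 → ∃ r : R, r • x ∈ S ∧ r • x ≠ 0
  -- Step B : maximal essential extension `M` of `S` inside `E₀`
  obtain ⟨M, hSM', hMmax⟩ :=
    zorn_le_nonempty₀ {M : Submodule R E₀ | S ≤ M ∧ Ess M} (fun c hc hchain y hy => by
      refine ⟨sSup c, ⟨le_trans (hc hy).1 (le_sSup hy), ?_⟩, fun z hz => le_sSup hz⟩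
      intro x hx hx0
      obtain ⟨Mi, hMi, hxMi⟩ :=
        (Submodule.mem_sSup_of_directed ⟨y, hy⟩ hchain.directedOn).mp hx
      exact (hc hMi).2 x hxMi hx0)
      S ⟨le_rfl, fun x hx hx0 => ⟨1, by simpa using hx, by simpa using hx0⟩⟩
  have hSM : S ≤ M := hMmax.prop.1
  have hEssM : Ess M := hMmax.prop.2
  -- Step C : complement `N` maximal with `N ⊓ M = ⊥`
  obtain ⟨N, hNmax⟩ : ∃ N, Maximal (fun N : Submodule R E₀ => N ⊓ M = ⊥) N := by
    apply zorn_le₀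
    intro c hc hchain
    rcases c.eq_empty_or_nonempty with rfl | ⟨y, hy⟩
    · exact ⟨⊥, bot_inf_eq M, fun z hz => absurd hz (Set.notMem_empty z)⟩
    refine ⟨sSup c, ?_, fun z hz => le_sSup hz⟩
    show sSup c ⊓ M = ⊥
    rw [eq_bot_iff]
    rintro x ⟨hx1, hx2⟩
    obtain ⟨Ni, hNi, hxNi⟩ :=
      (Submodule.mem_sSup_of_directed ⟨y, hy⟩ hchain.directedOn).mp hx1
    have h2 : Ni ⊓ M = ⊥ := hc hNi
    rw [eq_bot_iff] at h2
    exact h2 ⟨hxNi, hx2⟩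
  have hNM : N ⊓ M = ⊥ := hNmax.prop
  have mk0 : ∀ z : E₀, N.mkQ z = 0 ↔ z ∈ N := fun z => by
    rw [Submodule.mkQ_apply, Submodule.Quotient.mk_eq_zero]
  -- the map M → E₀/N
  let g : ↥M →ₗ[R] (E₀ ⧸ N) := N.mkQ.comp M.subtype
  have hgapp : ∀ m : ↥M, g m = N.mkQ (m : E₀) := fun m => rfl
  have hg : Function.Injective g := by
    rw [← LinearMap.ker_eq_bot, eq_bot_iff]
    rintro ⟨x, hxM⟩ hx
    have hxN : x ∈ N := (mk0 x).mp hx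
    have hx0 : x ∈ N ⊓ M := ⟨hxN, hxM⟩
    rw [hNM] at hx0
    simpa [Submodule.mem_bot] using hx0
  -- Step D : range g is essential in E₀/N, elementwise
  have hgess : ∀ y : E₀ ⧸ N, y ≠ 0 → ∃ r : R, r • y ∈ LinearMap.range g ∧ r • y ≠ 0 := by
    intro y hy
    obtain ⟨x, rfl⟩ := N.mkQ_surjective y
    have hxN : x ∉ N := fun h => hy ((mk0 x).mpr h)
    have hlt : ¬ ((N ⊔ Submodule.span R {x}) ⊓ M = ⊥) := by
      intro hbot
      have hle : N ⊔ Submodule.span R {x} ≤ N := hNmax.le_of_ge hbot le_sup_left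
      exact hxN (hle (Submodule.mem_sup_right (Submodule.mem_span_singleton_self x)))
    obtain ⟨m, hm, hm0⟩ := Submodule.exists_mem_ne_zero_of_ne_bot hlt
    obtain ⟨hmN', hmM⟩ := hm
    obtain ⟨n, hn, z, hz, hnz⟩ := Submodule.mem_sup.mp hmN'
    obtain ⟨r, rfl⟩ := Submodule.mem_span_singleton.mp hz
    have hkey : N.mkQ m = r • N.mkQ x := by
      rw [← hnz, map_add, (mk0 n).mpr hn, zero_add, map_smul]
    refine ⟨r, ⟨⟨m, hmM⟩, by rw [hgapp, hkey]⟩, ?_⟩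
    intro h0
    have hmN : m ∈ N := (mk0 m).mp (by rw [hkey, h0])
    have : m ∈ N ⊓ M := ⟨hmN, hmM⟩
    rw [hNM] at this
    exact hm0 (by simpa using this)
  -- Step E : extend the inclusion M ↪ E₀ along g using injectivity of E₀
  obtain ⟨h, hh⟩ := hE₀inj.out g hg M.subtype
  have hh' : ∀ m : ↥M, h (g m) = (m : E₀) := hh
  have hhinj : Function.Injective h := by
    rw [← LinearMap.ker_eq_bot, eq_bot_iff]
    intro y hy
    simp only [LinearMap.mem_ker] at hy
    rw [Submodule.mem_bot]
    by_contra hy0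
    obtain ⟨r, ⟨m, hm⟩, hr0⟩ := hgess y hy0
    have h2 : (m : E₀) = 0 := by rw [← hh' m, hm, map_smul, hy, smul_zero]
    have h3 : m = 0 := Subtype.ext h2
    apply hr0
    rw [← hm, h3, map_zero]
  -- Step F : range h = M
  have hMrange : M ≤ LinearMap.range h := fun x hx => ⟨g ⟨x, hx⟩, hh' ⟨x, hx⟩⟩
  have hrangeM : LinearMap.range h = M := by
    refine le_antisymm ?_ hMrange
    have hcond : S ≤ LinearMap.range h ∧ Ess (LinearMap.range h) := by
      constructor
      · exact hSM.trans hMrange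
      · rintro x ⟨y, rfl⟩ hx0
        have hy0 : y ≠ 0 := fun h0 => hx0 (by rw [h0, map_zero])
        obtain ⟨r, ⟨m, hm⟩, hr0⟩ := hgess y hy0
        have hrx : r • h y = (m : E₀) := by rw [← map_smul, ← hm, hh']
        have hm0 : (m : E₀) ≠ 0 := by
          intro h0
          apply hr0
          have hm00 : m = 0 := Subtype.ext h0
          rw [← hm, hm00, map_zero]
        obtain ⟨s, hs, hs0⟩ := hEssM m m.2 hm0
        exact ⟨s * r, by rw [mul_smul, hrx]; exact hs, by rw [mul_smul, hrx]; exact hs0⟩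
    exact hMmax.le_of_ge hcond hMrange
  -- Step G : mkQ ∘ h = id, hence E₀ = M ⊔ N
  have hπh : ∀ y : E₀ ⧸ N, N.mkQ (h y) = y := by
    intro y
    have hyM : h y ∈ M := hrangeM ▸ LinearMap.mem_range_self h y
    apply hhinj
    rw [show N.mkQ (h y) = g ⟨h y, hyM⟩ from rfl, hh' ⟨h y, hyM⟩]
  have hsup : M ⊔ N = ⊤ := by
    rw [eq_top_iff]
    intro x _
    have h1 : h (N.mkQ x) ∈ M := hrangeM ▸ LinearMap.mem_range_self h _
    have h2 : x - h (N.mkQ x) ∈ N := by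
      rw [← mk0, map_sub, hπh, sub_self]
    have hx : x = h (N.mkQ x) + (x - h (N.mkQ x)) := by abel
    rw [hx]
    exact Submodule.add_mem_sup h1 h2
  have hcompl : IsCompl M N :=
    ⟨disjoint_iff.mpr (by rwa [inf_comm] at hNM), codisjoint_iff.mpr hsup⟩
  -- Step H : M is injective (direct summand of an injective module)
  have hMinj : Module.Injective R ↥M := by
    constructor
    intro X Y _ _ _ _ f hf g'
    obtain ⟨h', hh'⟩ := hE₀inj.out f hf (M.subtype.comp g')
    refine ⟨(M.linearProjOfIsCompl N hcompl).comp h', fun x => ?_⟩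
    have hx : h' (f x) = ((g' x : ↥M) : E₀) := hh' x
    rw [LinearMap.comp_apply, hx]
    exact Submodule.linearProjOfIsCompl_apply_left hcompl (g' x)
  -- Step I : the embedding j : Q → M is essential
  let j : Q →ₗ[R] ↥M := i₀.codRestrict M (fun q => hSM ⟨q, rfl⟩)
  have hjinj : Function.Injective j := fun a b hab => hi₀ (congrArg Subtype.val hab)
  refine ⟨↥M, inferInstance, inferInstance, hMinj, j, hjinj, ?_⟩
  intro P hP
  rw [eq_bot_iff]
  intro x hx
  rw [Submodule.mem_bot]
  by_contra hx0
  have hxc : (x : E₀) ≠ 0 := fun h0 => hx0 (Subtype.ext h0)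
  obtain ⟨r, hr, hr0⟩ := hEssM (x : E₀) x.2 hxc
  obtain ⟨q, hq⟩ := hr
  have h1 : r • x ∈ P := P.smul_mem r hx
  have h2 : r • x ∈ LinearMap.range j := ⟨q, Subtype.ext hq⟩
  have h3 : r • x ∈ P ⊓ LinearMap.range j := ⟨h1, h2⟩
  rw [hP] at h3
  have h4 : r • x = 0 := by simpa using h3
  apply hr0
  exact_mod_cast congrArg Subtype.val h4

/-- Over a left Artinian ring, if a cyclic module `C` admits no nonzero map to the
injective hull of any simple module not isomorphic to a member of `𝒮`, then every
composition factor (simple subquotient) of `C` is isomorphic to a member of `𝒮`. -/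
theorem stmt7 {R : Type u} [Ring R] [IsArtinianRing R]
    (𝒮 : Set (ModuleCat.{u} R)) (h𝒮 : ∀ S ∈ 𝒮, IsSimpleModule R S)
    (C : Type u) [AddCommGroup C] [Module R C]
    (hcyc : ∃ c : C, Submodule.span R {c} = ⊤)
    (hhom : ∀ (S' E' : Type u) [AddCommGroup S'] [Module R S']
      [AddCommGroup E'] [Module R E'],
      IsSimpleModule R S' → (¬ ∃ S ∈ 𝒮, Nonempty (S' ≃ₗ[R] S)) →
      Module.Injective R E' →
      ∀ j : S' →ₗ[R] E', Function.Injective j →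
        (∀ N : Submodule R E', N ⊓ LinearMap.range j = ⊥ → N = ⊥) →
        ∀ f : C →ₗ[R] E', f = 0) :
    ∀ N₁ N₂ : Submodule R C, N₁ ≤ N₂ →
      IsSimpleModule R (N₂ ⧸ (Submodule.comap N₂.subtype N₁)) →
      ∃ S ∈ 𝒮, Nonempty ((N₂ ⧸ (Submodule.comap N₂.subtype N₁)) ≃ₗ[R] S) := by
  intro N₁ N₂ _ hsimp
  by_contra hns
  set Q := N₂ ⧸ (Submodule.comap N₂.subtype N₁) with hQ
  obtain ⟨E, _i1, _i2, hEinj, j, hjinj, hjess⟩ :=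
    exists_injective_essential_extension (R := R) Q
  -- build a nonzero map C →ₗ E
  let π : ↥N₂ →ₗ[R] Q := (Submodule.comap N₂.subtype N₁).mkQ
  have hsubinj : Function.Injective N₂.subtype := Subtype.val_injective
  obtain ⟨f, hf⟩ := hEinj.out N₂.subtype hsubinj (j.comp π)
  have hf0 : f = 0 := hhom Q E hsimp hns hEinj j hjinj hjess f
  have : Nontrivial Q := IsSimpleModule.nontrivial R Q
  obtain ⟨q, hq⟩ := exists_ne (0 : Q)
  obtain ⟨n, rfl⟩ := (Submodule.comap N₂.subtype N₁).mkQ_surjective q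
  apply hq
  have h1 : j (π n) = f (N₂.subtype n) := (hf n).symm
  rw [hf0] at h1
  simp only [LinearMap.zero_apply] at h1
  exact hjinj (by rw [h1, map_zero])
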